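/- Let n ≥ 1, and let β_0,…,β_n and γ_0,…,γ_{n-1} be elements of 𝔊 such that the operator identity (T_i − 1)∘(Σ_{k=0}^n (β_k·)∘T_j^k) = Σ_{k=0}^{n-1} (γ_k·)∘T_j^k∘L holds on 𝔊. If H_0,…,H_{n-2} are nowhere zero and H_{n-1} is identically zero, then Σ_{k=0}^n (β_k·)∘T_j^k = (β_n·)∘B_{n-1} as operators on 𝔊. -/

import Mathlib

/-!
Discrete (quad-graph) setting: the space `𝔊` is modelled by `QG = ℤ → ℤ → ℝ`
(functions `φ(i,j)`), with the shifts `Ti`, `Tj`, their inverses, and the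
`k`-fold shifts `TiZ k`, `TjZ k`.  For `g : QG`, pointwise multiplication
`g * φ` models the operator `g·`.
-/

/-- The function space `𝔊` of functions `ℤ² → ℝ`. -/
abbrev QG : Type := ℤ → ℤ → ℝ

namespace QG

noncomputable section

/-- The shift operator `T_i(φ)(i,j) = φ(i+1,j)`. -/
def Ti (φ : QG) : QG := fun i j => φ (i + 1) j

/-- The shift operator `T_j(φ)(i,j) = φ(i,j+1)`. -/
def Tj (φ : QG) : QG := fun i j => φ i (j + 1)

/-- The `k`-fold shift in `i`. -/
def TiZ (k : ℤ) (φ : QG) : QG := fun i j => φ (i + k) j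

/-- The `k`-fold shift in `j`. -/
def TjZ (k : ℤ) (φ : QG) : QG := fun i j => φ i (j + k)

/-- The inverse shift `T_i⁻¹`. -/
def TiInv (φ : QG) : QG := fun i j => φ (i - 1) j

/-- The inverse shift `T_j⁻¹`. -/
def TjInv (φ : QG) : QG := fun i j => φ i (j - 1)

/-- A function that is nowhere zero. -/
def NowhereZero (φ : QG) : Prop := ∀ i j, φ i j ≠ 0

/-- The linearization operator `L = T_i∘T_j − a·T_i − b·T_j − c·`. -/
def L (a b c : QG) (φ : QG) : QG := Ti (Tj φ) - a * Ti φ - b * Tj φ - c * φ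

/-- The pair `(b_k, H_k)` of the Laplace j-transformations:
`b_0 = a`, `H_0 = c + b·T_i⁻¹(a)`,
`b_{k+1} = T_i⁻¹(b_k)·T_j(H_k)/H_k`,
`H_{k+1} = T_j(H_k) − T_j^k(b)·b_{k+1} + T_j^{k+1}(b)·T_i⁻¹(b_{k+1})`. -/
def bH (a b c : QG) : ℕ → QG × QG
  | 0 => (a, c + b * TiInv a)
  | k + 1 =>
      let bk := TiInv (bH a b c k).1 * Tj (bH a b c k).2 / (bH a b c k).2
      (bk, Tj (bH a b c k).2 - TjZ (k : ℤ) b * bk + TjZ ((k : ℤ) + 1) b * TiInv bk)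

/-- The function `b_k`. -/
def bj (a b c : QG) (k : ℕ) : QG := (bH a b c k).1

/-- The Laplace j-invariant `H_k`. -/
def Hj (a b c : QG) (k : ℕ) : QG := (bH a b c k).2

/-- The operator `L_k`: `L_0 = L` and
`L_k = (T_i − T_j^k(b)·)∘(T_j − T_i⁻¹(b_k)·) − H_k·` for `k ≥ 1`. -/
def Lk (a b c : QG) : ℕ → QG → QG
  | 0, φ => L a b c φ
  | k + 1, φ =>
      Ti (Tj φ - TiInv (bj a b c (k + 1)) * φ)
        - TjZ ((k : ℤ) + 1) b * (Tj φ - TiInv (bj a b c (k + 1)) * φ)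
        - Hj a b c (k + 1) * φ

/-- `Bo (k+1)` is the operator `B_k = (T_j − T_i⁻¹(b_k)·)∘B_{k-1}`; `Bo 0 = id` is `B_{-1}`. -/
def Bo (a b c : QG) : ℕ → QG → QG
  | 0, φ => φ
  | k + 1, φ => Tj (Bo a b c k φ) - TiInv (bj a b c k) * Bo a b c k φ

/-- `Bbar k` is the operator `B̄_k`: `B̄_0 = id`, `B̄_k = (T_j − b_k·)∘B̄_{k-1}`. -/
def Bbar (a b c : QG) : ℕ → QG → QG
  | 0, φ => φ
  | k + 1, φ => Tj (Bbar a b c k φ) - bj a b c (k + 1) * Bbar a b c k φ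

/-- `Rchain p` is the composition
`((1/H_0)·)∘(T_i − b·)∘((1/H_1)·)∘(T_i − T_j(b)·)∘···∘((1/H_{p-1})·)∘(T_i − T_j^{p-1}(b)·)`
(the identity for `p = 0`). -/
def Rchain (a b c : QG) : ℕ → QG → QG
  | 0, φ => φ
  | k + 1, φ => Rchain a b c k ((1 / Hj a b c k) * (Ti φ - TjZ (k : ℤ) b * φ))

end
noncomputable section Aux

lemma sum_delta (N m : ℕ) (f : ℕ → ℝ) :
    ∑ k ∈ Finset.range N, f k * (if (k : ℤ) = (m : ℤ) then (1:ℝ) else 0)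
      = if m < N then f m else 0 := by
  have h : ∀ k ∈ Finset.range N,
      f k * (if (k : ℤ) = (m : ℤ) then (1:ℝ) else 0) = if k = m then f k else 0 := by
    intro k _
    by_cases hk : k = m
    · simp [hk]
    · have : ¬((k:ℤ) = (m:ℤ)) := by exact_mod_cast hk
      simp [hk, this]
  rw [Finset.sum_congr rfl h, Finset.sum_ite_eq']
  simp [Finset.mem_range]

lemma sum_delta' (N m : ℕ) (f : ℕ → ℝ) :
    ∑ k ∈ Finset.range N, f k * (if (k : ℤ) + 1 = (m : ℤ) then (1:ℝ) else 0)
      = if 1 ≤ m ∧ m ≤ N then f (m - 1) else 0 := by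
  rcases m with _ | m'
  · refine Finset.sum_eq_zero fun k _ => ?_
    have h0 : ¬((k:ℤ) + 1 = ((0:ℕ):ℤ)) := by push_cast; omega
    rw [if_neg h0, mul_zero]
  · have h : ∀ k ∈ Finset.range N,
        f k * (if (k : ℤ) + 1 = ((m'+1 : ℕ) : ℤ) then (1:ℝ) else 0)
          = if k = m' then f k else 0 := by
      intro k _
      by_cases hk : k = m'
      · subst hk; simp
      · have : ¬((k:ℤ) + 1 = ((m'+1 : ℕ) : ℤ)) := by push_cast; omega
        simp [hk, this]
    rw [Finset.sum_congr rfl h, Finset.sum_ite_eq']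
    have e1 : (m' ∈ Finset.range N) ↔ (1 ≤ m'+1 ∧ m'+1 ≤ N) := by rw [Finset.mem_range]; omega
    simp only [e1, Nat.add_sub_cancel]

lemma sum_div_aux (N : ℕ) (E Ep V P : ℕ → ℝ)
    (hrec : ∀ m, m < N + 1 → E (m+1) = Ep m - (if m < N then Ep (m+1) * V (m+1) else 0))
    (hbot : E 0 + Ep 0 * V 0 = 0) :
    ∑ m ∈ Finset.range (N+2), E m * P m
      = ∑ m ∈ Finset.range (N+1), Ep m * (P (m+1) - V m * P m) := by
  have L1 : ∑ m ∈ Finset.range (N+2), E m * P m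
      = (∑ m ∈ Finset.range (N+1), E (m+1) * P (m+1)) + E 0 * P 0 :=
    Finset.sum_range_succ' _ _
  have L2 : ∀ m ∈ Finset.range (N+1),
      E (m+1) * P (m+1) = Ep m * P (m+1)
        - (if m < N then Ep (m+1) * V (m+1) * P (m+1) else 0) := by
    intro m hm
    rw [hrec m (Finset.mem_range.mp hm)]
    by_cases h : m < N <;> simp [h] <;> ring
  have L3 : ∑ m ∈ Finset.range (N+1), (if m < N then Ep (m+1) * V (m+1) * P (m+1) else 0)
      = ∑ m ∈ Finset.range N, Ep (m+1) * V (m+1) * P (m+1) := by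
    rw [Finset.sum_range_succ]
    simp only [lt_irrefl, if_neg, if_false, add_zero]
    exact Finset.sum_congr rfl (fun m hm => by simp [Finset.mem_range.mp hm])
  have L4 : ∑ m ∈ Finset.range (N+1), Ep m * V m * P m
      = (∑ m ∈ Finset.range N, Ep (m+1) * V (m+1) * P (m+1)) + Ep 0 * V 0 * P 0 :=
    Finset.sum_range_succ' _ _
  rw [L1, Finset.sum_congr rfl L2, Finset.sum_sub_distrib, L3]
  have : ∑ m ∈ Finset.range (N+1), Ep m * (P (m+1) - V m * P m)
      = ∑ m ∈ Finset.range (N+1), Ep m * P (m+1)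
        - ∑ m ∈ Finset.range (N+1), Ep m * V m * P m := by
    rw [← Finset.sum_sub_distrib]
    exact Finset.sum_congr rfl (fun m _ => by ring)
  rw [this, L4]
  have hb : E 0 * P 0 = - (Ep 0 * V 0 * P 0) := by
    have h0 : E 0 = -(Ep 0 * V 0) := by linarith
    rw [h0]; ring
  rw [hb]; ring

/-- Pointwise coefficient `C_s` of the operator `L_s`. -/
def Cf (a b c : QG) (s : ℕ) : QG :=
  fun i y => Hj a b c s i y - b i (y + (s:ℤ)) * bj a b c s (i-1) y

lemma bj_zero (a b c : QG) : bj a b c 0 = a := rfl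

lemma Cf_zero (a b c : QG) : Cf a b c 0 = c := by
  funext i y
  simp [Cf, Hj, bj, bH, TiInv, Pi.add_apply, Pi.mul_apply]

lemma bj_succ (a b c : QG) (s : ℕ) (i j : ℤ) :
    bj a b c (s+1) i j = bj a b c s (i-1) j * Hj a b c s i (j+1) / Hj a b c s i j := by
  simp [bj, Hj, bH, TiInv, Tj, Pi.div_apply, Pi.mul_apply]

lemma Hj_succ (a b c : QG) (s : ℕ) (i j : ℤ) :
    Hj a b c (s+1) i j = Hj a b c s i (j+1)
      - b i (j + (s:ℤ)) * bj a b c (s+1) i j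
      + b i (j + (s:ℤ) + 1) * bj a b c (s+1) (i-1) j := by
  show (bH a b c (s+1)).2 i j = _
  rw [bH]
  simp only [TjZ, Tj, TiInv, Pi.add_apply, Pi.sub_apply, Pi.mul_apply, Pi.div_apply]
  rw [bj_succ, bj_succ]
  simp only [bj, Hj]
  ring_nf

/-- Coefficient relations of `(T_i−1)∘D = M∘L_s`: the `T_i T_j^m` part. -/
def Rel1 (a b c : QG) (s N : ℕ) (e g : ℕ → QG) : Prop :=
  ∀ m, m ≤ N → ∀ i j : ℤ, e m (i+1) j =
    (if 1 ≤ m then g (m-1) i j else 0) -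
    (if m < N then g m i j * bj a b c s i (j + (m:ℤ)) else 0)

/-- Coefficient relations of `(T_i−1)∘D = M∘L_s`: the `T_j^m` part. -/
def Rel2 (a b c : QG) (s N : ℕ) (e g : ℕ → QG) : Prop :=
  ∀ m, m ≤ N → ∀ i j : ℤ, e m i j =
    (if 1 ≤ m then g (m-1) i j * b i (j + (m:ℤ) - 1 + (s:ℤ)) else 0) +
    (if m < N then g m i j * Cf a b c s i (j + (m:ℤ)) else 0)

/-- Right division of `∑_{m≤N+1} e_m T_j^m` by `T_j − v·` (downward recursion). -/
def ediv (v : QG) (e : ℕ → QG) (N : ℕ) (m : ℕ) : QG :=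
  if m < N then (fun i j => e (m+1) i j + ediv v e N (m+1) i j * v i (j + (m:ℤ) + 1))
  else e (N+1)
termination_by N - m

lemma ediv_ge (v : QG) (e : ℕ → QG) (N m : ℕ) (h : N ≤ m) : ediv v e N m = e (N+1) := by
  rw [ediv, if_neg (by omega)]

lemma ediv_lt (v : QG) (e : ℕ → QG) (N m : ℕ) (h : m < N) (i j : ℤ) :
    ediv v e N m i j = e (m+1) i j + ediv v e N (m+1) i j * v i (j + (m:ℤ) + 1) := by
  rw [ediv, if_pos h]
lemma Cf_succ (a b c : QG) (s : ℕ) (i y : ℤ) :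
    Cf a b c (s+1) i y = Hj a b c s i (y+1) - b i (y + (s:ℤ)) * bj a b c (s+1) i y := by
  rw [Cf, Hj_succ]
  push_cast
  ring_nf

lemma step (a b c : QG) (s N : ℕ) (hN : 1 ≤ N) (e g : ℕ → QG)
    (hH : NowhereZero (Hj a b c s))
    (h1 : Rel1 a b c s (N+1) e g) (h2 : Rel2 a b c s (N+1) e g) :
    ∃ e' g' : ℕ → QG, e' N = e (N+1) ∧ Rel1 a b c (s+1) N e' g' ∧ Rel2 a b c (s+1) N e' g' ∧
      ∀ φ : QG, ∀ i j : ℤ,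
        ∑ m ∈ Finset.range (N+2), e m i j * φ i (j + (m:ℤ))
          = ∑ m ∈ Finset.range (N+1), e' m i j *
              (φ i (j + (m:ℤ) + 1) - bj a b c s (i-1) (j + (m:ℤ)) * φ i (j + (m:ℤ))) := by
  classical
  set v : QG := fun i j => bj a b c s (i-1) j with hv
  have hvs : ∀ x y : ℤ, v (x+1) y = bj a b c s x y := by
    intro x y; simp [hv]
  -- Claim A : the quotient coefficients satisfy `e'_m(i+1,j) = g_m(i,j)`.
  have claimA : ∀ k m, m + k = N → ∀ i j : ℤ, ediv v e N m (i+1) j = g m i j := by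
    intro k
    induction k with
    | zero =>
      intro m hm i j
      have hmN : m = N := by omega
      rw [hmN, ediv_ge v e N N le_rfl]
      have hB := h1 (N+1) le_rfl i j
      rw [if_pos (by omega), if_neg (by omega)] at hB
      simpa using hB
    | succ k ih =>
      intro m hm i j
      have hmN : m < N := by omega
      rw [ediv_lt v e N m hmN]
      have hA := ih (m+1) (by omega) i j
      have hB := h1 (m+1) (by omega) i j
      rw [if_pos (by omega), if_pos (by omega)] at hB
      simp only [Nat.add_sub_cancel] at hB
      rw [hvs]
      push_cast at hB ⊢
      rw [hB, hA]; ring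
  have claimA' : ∀ m, m ≤ N → ∀ i j : ℤ, ediv v e N m (i+1) j = g m i j :=
    fun m hm => claimA (N - m) m (by omega)
  -- Claim R : the remainder of the right division vanishes.
  have claimR : ∀ i j : ℤ, e 0 i j + ediv v e N 0 i j * v i j = 0 := by
    intro i j
    have h0 := h1 0 (by omega) (i-1) j
    rw [if_neg (by omega), if_pos (by omega)] at h0
    have hA := claimA' 0 (by omega) (i-1) j
    rw [sub_add_cancel] at h0 hA
    simp only [Nat.cast_zero, add_zero] at h0
    rw [h0, hA, hv]
    ring
  -- B-relations for `G_m = g_m·b(j+m+s) − e'_m`.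
  have Btop : ∀ i j : ℤ,
      g N i j * b i (j + (N:ℤ) + (s:ℤ)) - ediv v e N N i j = 0 := by
    intro i j
    have hB := h2 (N+1) le_rfl i j
    rw [if_pos (by omega), if_neg (by omega)] at hB
    simp only [Nat.add_sub_cancel] at hB
    rw [ediv_ge v e N N le_rfl, hB]
    push_cast
    ring_nf
  have Bmid : ∀ m, m + 1 ≤ N → ∀ i j : ℤ,
      g m i j * b i (j + (m:ℤ) + (s:ℤ)) - ediv v e N m i j
        = (g (m+1) i j * b i (j + (m:ℤ) + 1 + (s:ℤ)) - ediv v e N (m+1) i j)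
              * bj a b c s (i-1) (j + (m:ℤ) + 1)
          - g (m+1) i j * Hj a b c s i (j + (m:ℤ) + 1) := by
    intro m hm i j
    have hB := h2 (m+1) (by omega) i j
    rw [if_pos (by omega), if_pos (by omega)] at hB
    simp only [Nat.add_sub_cancel, Cf] at hB
    rw [ediv_lt v e N m (by omega)]
    have hvv : v i (j + (m:ℤ) + 1) = bj a b c s (i-1) (j + (m:ℤ) + 1) := rfl
    rw [hvv]
    push_cast at hB
    ring_nf at hB ⊢
    linarith [hB]
  have Bbot : ∀ i j : ℤ,
      (g 0 i j * b i (j + (s:ℤ)) - ediv v e N 0 i j) * bj a b c s (i-1) j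
        = g 0 i j * Hj a b c s i j := by
    intro i j
    have hB := h2 0 (by omega) i j
    rw [if_neg (by omega), if_pos (by omega)] at hB
    simp only [Nat.cast_zero, add_zero, Cf] at hB
    have hR := claimR i j
    rw [hv] at hR
    simp only at hR
    nlinarith [hB, hR]
  -- the new `γ` coefficients
  set gp : ℕ → QG := fun m i j =>
    -(g m i j * b i (j + (m:ℤ) + (s:ℤ)) - ediv v e N m i j) / Hj a b c s i (j + (m:ℤ) + 1)
    with hgp
  have hGgp : ∀ m, ∀ i j : ℤ,
      g m i j * b i (j + (m:ℤ) + (s:ℤ)) - ediv v e N m i j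
        = - gp m i j * Hj a b c s i (j + (m:ℤ) + 1) := by
    intro m i j
    rw [hgp]
    simp only
    rw [neg_div, neg_neg, div_mul_cancel₀ _ (hH i (j + (m:ℤ) + 1))]
  -- key identity relating `g` and the new coefficients `gp`
  have hg : ∀ m, m ≤ N → ∀ i j : ℤ,
      g m i j = (if 1 ≤ m then gp (m-1) i j else 0)
        - (if m < N then gp m i j * bj a b c (s+1) i (j + (m:ℤ)) else 0) := by
    intro m hm i j
    rcases Nat.eq_or_lt_of_le hm with hmN | hmN
    · -- m = N
      subst hmN
      rw [if_pos (by omega), if_neg (by omega), sub_zero]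
      have c1 : ((m - 1 : ℕ) : ℤ) = (m:ℤ) - 1 := by omega
      have hB := Bmid (m-1) (by omega) i j
      rw [show m - 1 + 1 = m from by omega] at hB
      rw [c1] at hB
      rw [show j + ((m:ℤ) - 1) + 1 = j + (m:ℤ) from by ring] at hB
      rw [Btop i j, zero_mul, zero_sub] at hB
      rw [hgp]; simp only
      rw [c1, show j + ((m:ℤ) - 1) + 1 = j + (m:ℤ) from by ring, hB]
      field_simp [hH i (j + (m:ℤ))]
    · -- m < N
      rw [if_pos hmN]
      rcases Nat.eq_zero_or_pos m with hm0 | hm0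
      · subst hm0
        rw [if_neg (by omega), zero_sub]
        have hB := Bbot i j
        have hb1 := bj_succ a b c s i (j + ((0:ℕ):ℤ))
        simp only [Nat.cast_zero, add_zero] at hb1 ⊢
        rw [hb1, hgp]
        simp only [Nat.cast_zero, add_zero]
        have d0 := hH i j
        have d1 := hH i (j+1)
        field_simp
        linear_combination (-1 : ℝ) * hB
      · -- 1 ≤ m < N
        obtain ⟨m', rfl⟩ : ∃ m', m = m' + 1 := ⟨m - 1, by omega⟩
        rw [if_pos (by omega)]
        simp only [Nat.add_sub_cancel]
        have hB := Bmid m' (by omega) i j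
        have hb1 := bj_succ a b c s i (j + ((m'+1 : ℕ):ℤ))
        have c1 : ((m' + 1 : ℕ) : ℤ) = (m':ℤ) + 1 := by push_cast; ring
        rw [c1] at hb1 ⊢
        rw [show j + ((m':ℤ) + 1) = j + (m':ℤ) + 1 from by ring] at hb1 ⊢
        rw [hb1, hgp]
        simp only
        rw [c1, show j + ((m':ℤ) + 1) = j + (m':ℤ) + 1 from by ring]
        have d1 := hH i (j + (m':ℤ) + 1)
        have d2 := hH i (j + (m':ℤ) + 1 + 1)
        field_simp
        linear_combination hB
  refine ⟨ediv v e N, gp, ediv_ge v e N N le_rfl, ?_, ?_, ?_⟩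
  · -- Rel1 at stage s+1
    intro m hm i j
    rw [claimA' m hm i j]
    exact hg m hm i j
  · -- Rel2 at stage s+1
    intro m hm i j
    have hE : ediv v e N m i j
        = g m i j * b i (j + (m:ℤ) + (s:ℤ)) + gp m i j * Hj a b c s i (j + (m:ℤ) + 1) := by
      have := hGgp m i j
      linarith [this]
    rcases Nat.eq_or_lt_of_le hm with hmN | hmN
    · -- m = N : top coefficient
      rw [if_pos (by omega), if_neg (by omega), add_zero]
      have hT := Btop i j
      have hgN := hg m hm i j
      rw [if_pos (by omega), if_neg (by omega), sub_zero] at hgN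
      have harg : (j + (m:ℤ) - 1 + ((s+1:ℕ):ℤ)) = j + (m:ℤ) + (s:ℤ) := by push_cast; ring
      rw [harg, ← hgN]
      subst hmN
      linarith [hT]
    · -- m < N
      rw [if_pos hmN]
      have hgm := hg m hm i j
      rw [if_pos hmN] at hgm
      have hCf := Cf_succ a b c s i (j + (m:ℤ))
      have harg : (j + (m:ℤ) - 1 + ((s+1:ℕ):ℤ)) = j + (m:ℤ) + (s:ℤ) := by push_cast; ring
      rw [harg, hCf, show j + (m:ℤ) + 1 = j + (m:ℤ) + 1 from rfl]
      rw [hE, hgm]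
      by_cases h1m : 1 ≤ m
      · rw [if_pos h1m, if_pos h1m]; ring
      · rw [if_neg h1m, if_neg h1m]; ring
  · -- the divided sum identity
    intro φ i j
    have hrec : ∀ m, m < N + 1 → e (m+1) i j
        = ediv v e N m i j - (if m < N then ediv v e N (m+1) i j * v i (j + ((m+1:ℕ):ℤ)) else 0) := by
      intro m hm
      rcases Nat.lt_or_ge m N with h | h
      · rw [if_pos h]
        have hd := ediv_lt v e N m h i j
        have c1 : ((m+1 : ℕ):ℤ) = (m:ℤ) + 1 := by push_cast; ring
        rw [c1, show j + ((m:ℤ) + 1) = j + (m:ℤ) + 1 from by ring]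
        linarith [hd]
      · have hmN : m = N := by omega
        rw [if_neg (by omega), sub_zero, hmN, ediv_ge v e N N le_rfl]
    have hbot : e 0 i j + ediv v e N 0 i j * v i (j + ((0:ℕ):ℤ)) = 0 := by
      simpa using claimR i j
    have hsum := sum_div_aux N (fun m => e m i j) (fun m => ediv v e N m i j)
      (fun m => v i (j + (m:ℤ))) (fun m => φ i (j + (m:ℤ))) hrec hbot
    rw [hsum]
    refine Finset.sum_congr rfl fun m hm => ?_
    have c1 : ((m+1 : ℕ):ℤ) = (m:ℤ) + 1 := by push_cast; ring
    simp only [c1, hv]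
    rw [show j + ((m:ℤ) + 1) = j + (m:ℤ) + 1 from by ring]
lemma sum_deltaJ (N m : ℕ) (j : ℤ) (f : ℕ → ℝ) :
    ∑ k ∈ Finset.range N, f k * (if j + (k:ℤ) = j + (m:ℤ) then (1:ℝ) else 0)
      = if m < N then f m else 0 := by
  rw [← sum_delta N m f]
  refine Finset.sum_congr rfl fun k _ => ?_
  by_cases h : (k:ℤ) = (m:ℤ)
  · rw [if_pos h, if_pos (by omega)]
  · rw [if_neg h, if_neg (by omega)]

lemma sum_deltaJ' (N m : ℕ) (j : ℤ) (f : ℕ → ℝ) :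
    ∑ k ∈ Finset.range N, f k * (if j + (k:ℤ) + 1 = j + (m:ℤ) then (1:ℝ) else 0)
      = if 1 ≤ m ∧ m ≤ N then f (m - 1) else 0 := by
  rw [← sum_delta' N m f]
  refine Finset.sum_congr rfl fun k _ => ?_
  by_cases h : (k:ℤ) + 1 = (m:ℤ)
  · rw [if_pos h, if_pos (by omega)]
  · rw [if_neg h, if_neg (by omega)]

section Base
variable (a b c : QG) (n : ℕ) (β γ : ℕ → QG)

lemma rows1
    (hJ : ∀ φ : QG, Ti (∑ k ∈ Finset.range (n + 1), β k * TjZ (k : ℤ) φ)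
          - ∑ k ∈ Finset.range (n + 1), β k * TjZ (k : ℤ) φ
        = ∑ k ∈ Finset.range n, γ k * TjZ (k : ℤ) (L a b c φ))
    (i j : ℤ) (ψ : ℤ → ℝ) :
    ∑ k ∈ Finset.range (n+1), β k (i+1) j * ψ (j + (k:ℤ))
      = ∑ k ∈ Finset.range n, γ k i j *
          (ψ (j + (k:ℤ) + 1) - a i (j + (k:ℤ)) * ψ (j + (k:ℤ))) := by
  have h := congrFun (congrFun (hJ (fun x y => if x = i + 1 then ψ y else 0)) i) j
  have hne : ¬ ((i : ℤ) = i + 1) := by omega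
  simp only [Ti, Tj, TjZ, TiInv, L, Pi.sub_apply, Pi.mul_apply, Finset.sum_apply,
    if_pos rfl, if_neg hne, mul_zero, sub_zero, zero_sub, Finset.sum_const_zero,
    eq_self_iff_true, if_true] at h
  convert h using 1

lemma rows0
    (hJ : ∀ φ : QG, Ti (∑ k ∈ Finset.range (n + 1), β k * TjZ (k : ℤ) φ)
          - ∑ k ∈ Finset.range (n + 1), β k * TjZ (k : ℤ) φ
        = ∑ k ∈ Finset.range n, γ k * TjZ (k : ℤ) (L a b c φ))
    (i j : ℤ) (ψ : ℤ → ℝ) :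
    ∑ k ∈ Finset.range (n+1), β k i j * ψ (j + (k:ℤ))
      = ∑ k ∈ Finset.range n, γ k i j *
          (b i (j + (k:ℤ)) * ψ (j + (k:ℤ) + 1) + c i (j + (k:ℤ)) * ψ (j + (k:ℤ))) := by
  have h := congrFun (congrFun (hJ (fun x y => if x = i then ψ y else 0)) i) j
  have hne : ¬ ((i : ℤ) + 1 = i) := by omega
  simp only [Ti, Tj, TjZ, TiInv, L, Pi.sub_apply, Pi.mul_apply, Finset.sum_apply,
    if_pos rfl, if_neg hne, mul_zero, sub_zero, zero_sub, Finset.sum_const_zero,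
    eq_self_iff_true, if_true] at h
  have h' : ∑ k ∈ Finset.range (n+1), β k i j * ψ (j + (k:ℤ))
      = - ∑ k ∈ Finset.range n, γ k i j *
          (- (b i (j + (k:ℤ)) * ψ (j + (k:ℤ) + 1)) - c i (j + (k:ℤ)) * ψ (j + (k:ℤ))) := by
    rw [← h]; ring_nf
  rw [h', ← Finset.sum_neg_distrib]
  refine Finset.sum_congr rfl fun k _ => by ring
lemma baseRel1
    (hJ : ∀ φ : QG, Ti (∑ k ∈ Finset.range (n + 1), β k * TjZ (k : ℤ) φ)
          - ∑ k ∈ Finset.range (n + 1), β k * TjZ (k : ℤ) φ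
        = ∑ k ∈ Finset.range n, γ k * TjZ (k : ℤ) (L a b c φ)) :
    Rel1 a b c 0 n β γ := by
  intro m hm i j
  have R := rows1 a b c n β γ hJ i j (fun y => if y = j + (m:ℤ) then (1:ℝ) else 0)
  rw [sum_deltaJ (n+1) m j (fun k => β k (i+1) j), if_pos (by omega)] at R
  have hsplit : ∀ k ∈ Finset.range n,
      γ k i j * ((if j + (k:ℤ) + 1 = j + (m:ℤ) then (1:ℝ) else 0)
          - a i (j + (k:ℤ)) * (if j + (k:ℤ) = j + (m:ℤ) then (1:ℝ) else 0))
        = γ k i j * (if j + (k:ℤ) + 1 = j + (m:ℤ) then (1:ℝ) else 0)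
          - (γ k i j * a i (j + (k:ℤ))) * (if j + (k:ℤ) = j + (m:ℤ) then (1:ℝ) else 0) :=
    fun k _ => by ring
  rw [Finset.sum_congr rfl hsplit, Finset.sum_sub_distrib,
    sum_deltaJ' n m j (fun k => γ k i j),
    sum_deltaJ n m j (fun k => γ k i j * a i (j + (k:ℤ)))] at R
  rw [bj_zero]
  simp only [hm, and_true] at R
  exact R

lemma baseRel2
    (hJ : ∀ φ : QG, Ti (∑ k ∈ Finset.range (n + 1), β k * TjZ (k : ℤ) φ)
          - ∑ k ∈ Finset.range (n + 1), β k * TjZ (k : ℤ) φ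
        = ∑ k ∈ Finset.range n, γ k * TjZ (k : ℤ) (L a b c φ)) :
    Rel2 a b c 0 n β γ := by
  intro m hm i j
  have R := rows0 a b c n β γ hJ i j (fun y => if y = j + (m:ℤ) then (1:ℝ) else 0)
  rw [sum_deltaJ (n+1) m j (fun k => β k i j), if_pos (by omega)] at R
  have hsplit : ∀ k ∈ Finset.range n,
      γ k i j * (b i (j + (k:ℤ)) * (if j + (k:ℤ) + 1 = j + (m:ℤ) then (1:ℝ) else 0)
          + c i (j + (k:ℤ)) * (if j + (k:ℤ) = j + (m:ℤ) then (1:ℝ) else 0))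
        = (γ k i j * b i (j + (k:ℤ))) * (if j + (k:ℤ) + 1 = j + (m:ℤ) then (1:ℝ) else 0)
          + (γ k i j * c i (j + (k:ℤ))) * (if j + (k:ℤ) = j + (m:ℤ) then (1:ℝ) else 0) :=
    fun k _ => by ring
  rw [Finset.sum_congr rfl hsplit, Finset.sum_add_distrib,
    sum_deltaJ' n m j (fun k => γ k i j * b i (j + (k:ℤ))),
    sum_deltaJ n m j (fun k => γ k i j * c i (j + (k:ℤ)))] at R
  rw [Cf_zero]
  simp only [hm, and_true] at R
  rcases Nat.lt_or_ge m 1 with h1m | h1m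
  · rw [if_neg (by omega)] at R ⊢
    rw [R]
  · rw [if_pos h1m] at R ⊢
    rw [show j + (m:ℤ) - 1 + ((0:ℕ):ℤ) = j + ((m-1:ℕ):ℤ) from by omega]
    exact R

end Base
end Aux

/-- Let `n ≥ 1` and `β_0, …, β_n, γ_0, …, γ_{n-1} ∈ 𝔊` satisfy the
formal j-integral relation `(T_i − 1)∘(Σ_{k=0}^n (β_k·)∘T_j^k) = Σ_{k=0}^{n-1} (γ_k·)∘T_j^k∘L`
on `𝔊`.  If `H_0, …, H_{n-2}` are nowhere zero and `H_{n-1} ≡ 0`, then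
`Σ_{k=0}^n (β_k·)∘T_j^k = (β_n·)∘B_{n-1}` as operators on `𝔊`.
(Here `B_{n-1} = Bo n`.) -/
theorem statement14 (a b c : QG) (n : ℕ) (hn : 1 ≤ n) (β γ : ℕ → QG)
    (hJ : ∀ φ : QG,
      Ti (∑ k ∈ Finset.range (n + 1), β k * TjZ (k : ℤ) φ)
          - ∑ k ∈ Finset.range (n + 1), β k * TjZ (k : ℤ) φ
        = ∑ k ∈ Finset.range n, γ k * TjZ (k : ℤ) (L a b c φ))
    (hH : ∀ m, m + 1 < n → NowhereZero (Hj a b c m))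
    (hHn : Hj a b c (n - 1) = 0) :
    ∀ φ : QG, ∑ k ∈ Finset.range (n + 1), β k * TjZ (k : ℤ) φ = β n * Bo a b c n φ := by
  have key : ∀ s : ℕ, s + 1 ≤ n → ∃ e g' : ℕ → QG,
      e (n - s) = β n ∧ Rel1 a b c s (n - s) e g' ∧ Rel2 a b c s (n - s) e g' ∧
      ∀ (ψ : QG) (i j : ℤ), (∑ k ∈ Finset.range (n+1), β k i j * ψ i (j + (k:ℤ)))
          = ∑ m ∈ Finset.range (n - s + 1), e m i j * Bo a b c s ψ i (j + (m:ℤ)) := by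
    intro s
    induction s with
    | zero =>
      intro _
      exact ⟨β, γ, rfl, baseRel1 a b c n β γ hJ, baseRel2 a b c n β γ hJ,
        fun ψ i j => rfl⟩
    | succ s ih =>
      intro hs1
      obtain ⟨e, g', hC1, h1, h2, h3⟩ := ih (by omega)
      have hNn : n - s = (n - (s+1)) + 1 := by omega
      set N := n - (s+1) with hNdef
      rw [hNn] at hC1 h1 h2 h3
      obtain ⟨e', g'', hto, h1', h2', hsum⟩ :=
        step a b c s N (by omega) e g' (hH s (by omega)) h1 h2
      refine ⟨e', g'', by rw [hto, ← hC1], h1', h2', ?_⟩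
      intro ψ i j
      rw [h3 ψ i j]
      have hb := hsum (Bo a b c s ψ) i j
      rw [show N + 1 + 1 = N + 2 by omega, hb]
      refine Finset.sum_congr rfl fun m hm => ?_
      simp [Bo, Tj, TiInv, Pi.sub_apply, Pi.mul_apply]
  obtain ⟨e, g', hC1, h1, h2, h3⟩ := key (n-1) (by omega)
  have hn1 : n - (n-1) = 1 := by omega
  rw [hn1] at hC1 h2 h3
  intro φ
  funext i j
  simp only [Finset.sum_apply, Pi.mul_apply, TjZ]
  rw [h3 φ i j, Finset.sum_range_succ, Finset.sum_range_one]
  -- use the two coefficient relations at the zero Laplace invariant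
  have hH0 : ∀ y : ℤ, Hj a b c (n-1) i y = 0 := fun y => by rw [hHn]; rfl
  have he1 : e 1 i j = g' 0 i j * b i (j + ((n-1:ℕ):ℤ)) := by
    have h21 := h2 1 le_rfl i j
    rw [if_pos le_rfl, if_neg (by omega), add_zero] at h21
    rw [h21, show j + ((1:ℕ):ℤ) - 1 + ((n-1:ℕ):ℤ) = j + ((n-1:ℕ):ℤ) from by push_cast; ring]
  have he0 : e 0 i j = - (e 1 i j * bj a b c (n-1) (i-1) j) := by
    have h20 := h2 0 (by omega) i j
    rw [if_neg (by omega), if_pos (by omega), zero_add] at h20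
    rw [h20, he1]
    simp only [Cf, Nat.cast_zero, add_zero, hH0, zero_sub]
    ring
  have hBn : Bo a b c n φ i j
      = Bo a b c (n-1) φ i (j+1) - bj a b c (n-1) (i-1) j * Bo a b c (n-1) φ i j := by
    rw [show n = (n-1) + 1 from by omega]
    simp [Bo, Tj, TiInv, Pi.sub_apply, Pi.mul_apply]
  have hβ : β n i j = e 1 i j := (congrFun (congrFun hC1 i) j).symm
  rw [hβ, hBn, he0]
  simp only [Nat.cast_zero, add_zero, Nat.cast_one]
  ring

end QG
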